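/- For every finite abelian group G and every q ∈ G^n, the matrix M_q is positive semi-definite. -/

import Mathlib

open scoped Classical

noncomputable section

namespace CLPaper

open Matrix

/-- The matrix `B_n`: rows indexed by `[n]³`, columns by `[n]`;
the row of `(x₁,x₂,x₃)` is `e_{x₁} + e_{x₂} + e_{x₃}`. -/
def B (n : ℕ) : Matrix (Fin n × Fin n × Fin n) (Fin n) ℤ :=
  fun x j => (if x.1 = j then 1 else 0) + (if x.2.1 = j then 1 else 0) +
    (if x.2.2 = j then 1 else 0)

/-- `det (B_n[K])` for an `n`-element subset `K` of `[n]³` (rows enumerated by a fixed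
bijection; the quantities we consider do not depend on this choice), `0` otherwise. -/
def subdet (n : ℕ) (K : Finset (Fin n × Fin n × Fin n)) : ℤ :=
  if h : K.card = n then
    ((B n).submatrix
      (fun i : Fin n => ((K.equivFin.symm (Fin.cast h.symm i)) : Fin n × Fin n × Fin n))
      id).det
  else 0

/-- The cokernel `ℤ^n / (row span of the rows of `B_n` indexed by `K`)`. -/
def cokK (n : ℕ) (K : Finset (Fin n × Fin n × Fin n)) : Type :=
  (Fin n → ℤ) ⧸ Submodule.span ℤ ((fun x => B n x) '' (K : Set (Fin n × Fin n × Fin n)))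

instance (n : ℕ) (K : Finset (Fin n × Fin n × Fin n)) : AddCommGroup (cokK n K) :=
  inferInstanceAs (AddCommGroup ((Fin n → ℤ) ⧸ Submodule.span ℤ _))

/-- The `p`-Sylow subgroup of an abelian group: the subgroup of elements annihilated
by a power of `p`. -/
def sylow (p : ℕ) (A : Type*) [AddCommGroup A] : AddSubgroup A where
  carrier := {x | ∃ k : ℕ, p ^ k • x = 0}
  zero_mem' := ⟨0, by simp⟩
  add_mem' := by
    rintro x y ⟨k, hk⟩ ⟨l, hl⟩
    refine ⟨k + l, ?_⟩
    rw [smul_add, pow_add, mul_comm, mul_smul, hk, smul_zero, mul_comm, mul_smul, hl,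
      smul_zero, add_zero]
  neg_mem' := by
    rintro x ⟨k, hk⟩
    exact ⟨k, by rw [smul_neg, hk, neg_zero]⟩

/-- Number of surjective homomorphisms from `A` to `G`. -/
def numSur (A G : Type*) [AddCommGroup A] [AddCommGroup G] : ℕ :=
  Nat.card {f : A →+ G // Function.Surjective f}

variable {G : Type*} [AddCommGroup G] [Fintype G]

/-- The submatrix `B_{n,q}` of `B_n` consisting of the rows indexed by
`I_q = {(x₁,x₂,x₃) : q_{x₁} + q_{x₂} + q_{x₃} = 0}`. -/
def Bq (n : ℕ) (q : Fin n → G) :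
    Matrix {x : Fin n × Fin n × Fin n // q x.1 + q x.2.1 + q x.2.2 = 0} (Fin n) ℤ :=
  fun x j => B n x.1 j

/-- The Gram matrix `B_{n,q}ᵀ B_{n,q}`. -/
def gram (n : ℕ) (q : Fin n → G) : Matrix (Fin n) (Fin n) ℤ :=
  (Bq n q)ᵀ * Bq n q

/-- `n_a(q) = #{i : q_i = a}`. -/
def cnt {n : ℕ} (q : Fin n → G) (a : G) : ℕ :=
  (Finset.univ.filter (fun i => q i = a)).card

/-- `m_a = ∑_b n_b n_{-a-b}` associated to a counts vector `n̄ : G → ℕ`. -/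
def mOf (nbar : G → ℕ) (a : G) : ℕ :=
  ∑ b : G, nbar b * nbar (-a - b)

/-- The matrix `M` indexed by `G₊ = {a : n_a > 0}`, with
`M(a,a) = 2 n_a n_{-2a} + m_a` and `M(a,b) = 2 √(n_a n_b) n_{-a-b}` for `a ≠ b`. -/
def Mmat (nbar : G → ℕ) :
    Matrix {a : G // 0 < nbar a} {a : G // 0 < nbar a} ℝ :=
  fun a b =>
    if (a : G) = (b : G) then
      2 * (nbar (a : G) : ℝ) * (nbar (-(2 • (a : G))) : ℝ) + (mOf nbar (a : G) : ℝ)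
    else
      2 * Real.sqrt ((nbar (a : G) : ℝ) * (nbar (b : G) : ℝ)) * (nbar (-(a : G) - b) : ℝ)

/-- The set `S(n̄)` of vectors `q ∈ G^n` with the prescribed counts. -/
def Sset (n : ℕ) (nbar : G → ℕ) : Finset (Fin n → G) :=
  Finset.univ.filter (fun q => ∀ a : G, cnt q a = nbar a)

/-- `E(n̄) = ∑_{q ∈ S(n̄)} det(B_{n,q}ᵀ B_{n,q}) / (3^{n+1} n^{2n})`. -/
def Eval (n : ℕ) (nbar : G → ℕ) : ℝ :=
  (∑ q ∈ Sset n nbar, ((gram n q).det : ℝ)) / ((3 : ℝ) ^ (n + 1) * (n : ℝ) ^ (2 * n))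

/-- Kullback–Leibler divergence of two probability vectors on `G` (natural log;
terms with `ν a = 0` contribute `0`). -/
def klDiv (ν μ : G → ℝ) : ℝ :=
  ∑ a : G, if ν a = 0 then 0 else ν a * Real.log (ν a / μ a)

/-- `ν_{n̄}(a) = n_a / n`. -/
def nuOf (n : ℕ) (nbar : G → ℕ) : G → ℝ := fun a => (nbar a : ℝ) / n

/-- `μ_{n̄}(a) = m_a / n²`. -/
def muOf (n : ℕ) (nbar : G → ℕ) : G → ℝ := fun a => (mOf nbar a : ℝ) / (n : ℝ) ^ 2

/-- `t_n = 2C √(|G| n log n)`. -/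
def tSeq (G : Type*) [Fintype G] (C : ℝ) (n : ℕ) : ℝ :=
  2 * C * Real.sqrt ((Fintype.card G) * n * Real.log n)

/-- `r_n = 4C |G| log n`. -/
def rSeq (G : Type*) [Fintype G] (C : ℝ) (n : ℕ) : ℝ :=
  4 * C * (Fintype.card G) * Real.log n

/-- `n̄ ∈ D_n`: the counts sum to `n` and the support generates `G`. -/
def memD (n : ℕ) (nbar : G → ℕ) : Prop :=
  (∑ a : G, nbar a = n) ∧ AddSubgroup.closure {a : G | 0 < nbar a} = ⊤

/-- `n̄ ∈ D_n'`: moreover `m_a > 0` for all `a ∈ G₊`. -/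
def memD' (n : ℕ) (nbar : G → ℕ) : Prop :=
  memD n nbar ∧ ∀ a : G, 0 < nbar a → 0 < mOf nbar a

/-- `u_H(g) = 1/|H|` for `g ∈ H` and `0` otherwise. -/
def uH (H : AddSubgroup G) : G → ℝ :=
  fun g => if g ∈ H then (Nat.card H : ℝ)⁻¹ else 0

/-- `n̄ ∈ B(n,H)`. -/
def memB (C : ℝ) (n : ℕ) (H : AddSubgroup G) (nbar : G → ℕ) : Prop :=
  memD' n nbar ∧ (∀ a : G, |(nbar a : ℝ) - n * uH H a| ≤ tSeq G C n) ∧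
    (∑ a ∈ Finset.univ.filter (fun a : G => a ∉ H), (nbar a : ℝ)) ≤ rSeq G C n

end CLPaper

open CLPaper

section MmatPSD

open Matrix

variable {G : Type*} [AddCommGroup G] [Fintype G]

/-- Reindexing a sum over `{(a,b,c) : a+b+c=0}` by swapping slots 2 and 3. -/
lemma sum_e23 (f : G → G → G → ℝ) :
    ∑ p : G × G, f p.1 p.2 (-p.1 - p.2) = ∑ p : G × G, f p.1 (-p.1 - p.2) p.2 := by
  refine Fintype.sum_equiv
    ⟨fun p => (p.1, -p.1 - p.2), fun p => (p.1, -p.1 - p.2), fun p => ?_, fun p => ?_⟩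
    _ _ (fun p => ?_)
  · ext <;> simp <;> abel
  · ext <;> simp <;> abel
  · show f p.1 p.2 (-p.1 - p.2) = f p.1 (-p.1 - (-p.1 - p.2)) (-p.1 - p.2)
    rw [show -p.1 - (-p.1 - p.2) = p.2 by abel]

/-- Reindexing a sum over `{(a,b,c) : a+b+c=0}` by swapping slots 1 and 3. -/
lemma sum_e13 (f : G → G → G → ℝ) :
    ∑ p : G × G, f p.1 p.2 (-p.1 - p.2) = ∑ p : G × G, f (-p.1 - p.2) p.2 p.1 := by
  refine Fintype.sum_equiv
    ⟨fun p => (-p.1 - p.2, p.2), fun p => (-p.1 - p.2, p.2), fun p => ?_, fun p => ?_⟩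
    _ _ (fun p => ?_)
  · ext <;> simp <;> abel
  · ext <;> simp <;> abel
  · show f p.1 p.2 (-p.1 - p.2) = f (-(-p.1 - p.2) - p.2) p.2 (-p.1 - p.2)
    rw [show -(-p.1 - p.2) - p.2 = p.1 by abel]

/-- Reindexing a sum over `{(a,b,c) : a+b+c=0}` by swapping slots 1 and 2. -/
lemma sum_e12 (f : G → G → G → ℝ) :
    ∑ p : G × G, f p.1 p.2 (-p.1 - p.2) = ∑ p : G × G, f p.2 p.1 (-p.1 - p.2) := by
  refine Fintype.sum_equiv (Equiv.prodComm G G) _ _ (fun p => ?_)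
  show f p.1 p.2 (-p.1 - p.2) = f p.1 p.2 (-p.2 - p.1)
  rw [show -p.2 - p.1 = -p.1 - p.2 by abel]

/-- `M_{n̄}` is positive semi-definite, for any counts vector `n̄`. -/
theorem Mmat_posSemidef_of_counts (nbar : G → ℕ) : (Mmat nbar).PosSemidef := by
  classical
  refine Matrix.PosSemidef.of_dotProduct_mulVec_nonneg ?_ ?_
  · -- Hermitian
    ext a b
    simp only [Matrix.conjTranspose_apply, star_trivial, Mmat]
    by_cases h : (b : G) = (a : G)
    · rw [if_pos h, if_pos h.symm, h]
    · rw [if_neg h, if_neg (fun hh => h hh.symm)]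
      rw [show -(b : G) - (a : G) = -(a : G) - b by abel,
        mul_comm ((nbar (b : G) : ℝ)) ((nbar (a : G) : ℝ))]
  · intro x
    set N : G → ℝ := fun a => (nbar a : ℝ) with hNdef
    set u : G → ℝ := fun a => if h : 0 < nbar a then x ⟨a, h⟩ / Real.sqrt (N a) else 0
      with hudef
    have hN0 : ∀ a : G, 0 ≤ N a := fun a => Nat.cast_nonneg _
    have hx : ∀ a : {a : G // 0 < nbar a}, x a = Real.sqrt (N ↑a) * u ↑a := by
      intro a
      have hpos : (0 : ℝ) < N ↑a := by simp only [hNdef]; exact_mod_cast a.2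
      have hs : Real.sqrt (N ↑a) ≠ 0 := by positivity
      rw [hudef]
      simp only [dif_pos a.2]
      rw [mul_comm, div_mul_cancel₀ _ hs]
    have hu0 : ∀ a : G, nbar a = 0 → u a = 0 := by
      intro a ha
      rw [hudef]
      simp [ha]
    -- the pointwise description of the quadratic form
    set F : G → G → ℝ := fun a b =>
      2 * N a * N b * N (-a - b) * u a * u b +
        (if a = b then N a * (mOf nbar a : ℝ) * (u a * u a) else 0) with hFdef
    have step1 : dotProduct (star x) (Mmat nbar *ᵥ x) =
        ∑ a : {a : G // 0 < nbar a}, ∑ b : {a : G // 0 < nbar a}, F ↑a ↑b := by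
      simp only [dotProduct, Matrix.mulVec, star_trivial, Finset.mul_sum, dotProduct]
      refine Finset.sum_congr rfl (fun a _ => Finset.sum_congr rfl (fun b _ => ?_))
      rw [hFdef]
      simp only [Mmat]
      by_cases h : (a : G) = (b : G)
      · have hab : a = b := Subtype.ext h
        subst hab
        rw [if_pos rfl, if_pos rfl, hx a]
        rw [show -(2 • (a : G)) = -(a : G) - (a : G) by rw [two_smul]; abel]
        have hs : Real.sqrt (N ↑a) * Real.sqrt (N ↑a) = N ↑a :=
          Real.mul_self_sqrt (hN0 _)
        linear_combination (u ↑a * u ↑a *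
          (2 * N ↑a * N (-(a : G) - (a : G)) + (mOf nbar (a : G) : ℝ))) * hs
      · rw [if_neg h, if_neg h, add_zero, hx a, hx b]
        have hsa : Real.sqrt (N ↑a) * Real.sqrt (N ↑a) = N ↑a :=
          Real.mul_self_sqrt (hN0 _)
        have hsb : Real.sqrt (N ↑b) * Real.sqrt (N ↑b) = N ↑b :=
          Real.mul_self_sqrt (hN0 _)
        have hmul : Real.sqrt (N ↑a * N ↑b) = Real.sqrt (N ↑a) * Real.sqrt (N ↑b) :=
          Real.sqrt_mul (hN0 _) _
        rw [hmul]
        linear_combination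
          (2 * N (-(a : G) - (b : G)) * u ↑a * u ↑b * (Real.sqrt (N ↑a) * Real.sqrt (N ↑a))) * hsb
          + (2 * N (-(a : G) - (b : G)) * u ↑a * u ↑b * N ↑b) * hsa
    -- vanishing off the support
    have hF0l : ∀ a b : G, nbar a = 0 → F a b = 0 := by
      intro a b ha
      rw [hFdef]
      have : N a = 0 := by rw [hNdef]; simp [ha]
      by_cases h : a = b
      · subst h; simp [this]
      · simp [h, this]
    have hF0r : ∀ a b : G, nbar b = 0 → F a b = 0 := by
      intro a b hb
      rw [hFdef]
      have : N b = 0 := by rw [hNdef]; simp [hb]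
      by_cases h : a = b
      · subst h; simp [this]
      · simp [h, this]
    have step2 : (∑ a : {a : G // 0 < nbar a}, ∑ b : {a : G // 0 < nbar a}, F ↑a ↑b)
        = ∑ a : G, ∑ b : G, F a b := by
      have inner : ∀ a : G, (∑ b : {a : G // 0 < nbar a}, F a ↑b) = ∑ b : G, F a b := by
        intro a
        rw [← Finset.sum_subtype (Finset.univ.filter (fun b : G => 0 < nbar b))
          (by simp) (fun b => F a b)]
        refine Finset.sum_filter_of_ne (fun b _ hb => ?_)
        by_contra h
        exact hb (hF0r a b (Nat.eq_zero_of_not_pos h))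
      calc (∑ a : {a : G // 0 < nbar a}, ∑ b : {a : G // 0 < nbar a}, F ↑a ↑b)
          = ∑ a : {a : G // 0 < nbar a}, ∑ b : G, F ↑a b :=
            Finset.sum_congr rfl (fun a _ => inner a)
        _ = ∑ a : G, ∑ b : G, F a b := by
            rw [← Finset.sum_subtype (Finset.univ.filter (fun a : G => 0 < nbar a))
              (by simp) (fun a => ∑ b : G, F a b)]
            refine Finset.sum_filter_of_ne (fun a _ ha => ?_)
            by_contra h
            refine ha (Finset.sum_eq_zero (fun b _ => hF0l a b (Nat.eq_zero_of_not_pos h)))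
    set A : ℝ := ∑ p : G × G, N p.1 * N p.2 * N (-p.1 - p.2) * (u p.1 * u p.2) with hAdef
    set B : ℝ := ∑ p : G × G, N p.1 * N p.2 * N (-p.1 - p.2) * (u p.1 * u p.1) with hBdef
    have step3 : (∑ a : G, ∑ b : G, F a b) = 2 * A + B := by
      rw [hFdef]
      simp only [Finset.sum_add_distrib]
      have h1 : (∑ a : G, ∑ b : G, 2 * N a * N b * N (-a - b) * u a * u b) = 2 * A := by
        calc (∑ a : G, ∑ b : G, 2 * N a * N b * N (-a - b) * u a * u b)
            = ∑ p : G × G, 2 * N p.1 * N p.2 * N (-p.1 - p.2) * u p.1 * u p.2 :=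
              (Fintype.sum_prod_type' _).symm
          _ = 2 * A := by
              rw [hAdef, Finset.mul_sum]
              exact Finset.sum_congr rfl (fun p _ => by ring)
      have h2 : (∑ a : G, ∑ b : G,
          (if a = b then N a * (mOf nbar a : ℝ) * (u a * u a) else 0)) = B := by
        have hm : ∀ a : G, (mOf nbar a : ℝ) = ∑ b : G, N b * N (-a - b) := by
          intro a
          rw [mOf]
          push_cast
          rfl
        calc (∑ a : G, ∑ b : G, (if a = b then N a * (mOf nbar a : ℝ) * (u a * u a) else 0))
            = ∑ a : G, N a * (mOf nbar a : ℝ) * (u a * u a) := by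
              refine Finset.sum_congr rfl (fun a _ => ?_)
              rw [Finset.sum_ite_eq Finset.univ a
                (fun _ => N a * (mOf nbar a : ℝ) * (u a * u a)), if_pos (Finset.mem_univ a)]
          _ = ∑ a : G, ∑ b : G, N a * N b * N (-a - b) * (u a * u a) := by
              refine Finset.sum_congr rfl (fun a _ => ?_)
              rw [hm a, Finset.mul_sum, Finset.sum_mul]
              exact Finset.sum_congr rfl (fun b _ => by ring)
          _ = ∑ p : G × G, N p.1 * N p.2 * N (-p.1 - p.2) * (u p.1 * u p.1) :=
              (Fintype.sum_prod_type' _).symm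
          _ = B := hBdef.symm
      rw [h1, h2]
    have hQ2 : (∑ p : G × G, N p.1 * N p.2 * N (-p.1 - p.2) * (u p.2 * u p.2)) = B := by
      rw [sum_e12 (fun a b c => N a * N b * N c * (u b * u b)), hBdef]
      exact Finset.sum_congr rfl (fun p _ => by ring)
    have hQ3 : (∑ p : G × G, N p.1 * N p.2 * N (-p.1 - p.2) *
        (u (-p.1 - p.2) * u (-p.1 - p.2))) = B := by
      rw [sum_e13 (fun a b c => N a * N b * N c * (u c * u c)), hBdef]
      exact Finset.sum_congr rfl (fun p _ => by ring)
    have hR13 : (∑ p : G × G, N p.1 * N p.2 * N (-p.1 - p.2) *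
        (u p.1 * u (-p.1 - p.2))) = A := by
      rw [sum_e23 (fun a b c => N a * N b * N c * (u a * u c)), hAdef]
      exact Finset.sum_congr rfl (fun p _ => by ring)
    have hR23 : (∑ p : G × G, N p.1 * N p.2 * N (-p.1 - p.2) *
        (u p.2 * u (-p.1 - p.2))) = A := by
      rw [sum_e13 (fun a b c => N a * N b * N c * (u b * u c)), hAdef]
      exact Finset.sum_congr rfl (fun p _ => by ring)
    have key : (∑ p : G × G, N p.1 * N p.2 * N (-p.1 - p.2) *
        (u p.1 + u p.2 + u (-p.1 - p.2)) ^ 2) = 3 * (2 * A + B) := by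
      have expand : ∀ p : G × G, N p.1 * N p.2 * N (-p.1 - p.2) *
          (u p.1 + u p.2 + u (-p.1 - p.2)) ^ 2 =
          N p.1 * N p.2 * N (-p.1 - p.2) * (u p.1 * u p.1)
          + N p.1 * N p.2 * N (-p.1 - p.2) * (u p.2 * u p.2)
          + N p.1 * N p.2 * N (-p.1 - p.2) * (u (-p.1 - p.2) * u (-p.1 - p.2))
          + 2 * (N p.1 * N p.2 * N (-p.1 - p.2) * (u p.1 * u p.2))
          + 2 * (N p.1 * N p.2 * N (-p.1 - p.2) * (u p.1 * u (-p.1 - p.2)))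
          + 2 * (N p.1 * N p.2 * N (-p.1 - p.2) * (u p.2 * u (-p.1 - p.2))) := by
        intro p; ring
      rw [Finset.sum_congr rfl (fun p _ => expand p)]
      simp only [Finset.sum_add_distrib, ← Finset.mul_sum]
      rw [hQ2, hQ3, hR13, hR23]
      rw [show (∑ p : G × G, N p.1 * N p.2 * N (-p.1 - p.2) * (u p.1 * u p.1)) = B from rfl,
        show (∑ p : G × G, N p.1 * N p.2 * N (-p.1 - p.2) * (u p.1 * u p.2)) = A from rfl]
      ring
    have hnonneg : (0 : ℝ) ≤ ∑ p : G × G, N p.1 * N p.2 * N (-p.1 - p.2) *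
        (u p.1 + u p.2 + u (-p.1 - p.2)) ^ 2 := by
      refine Finset.sum_nonneg (fun p _ => ?_)
      have := hN0 p.1; have := hN0 p.2; have := hN0 (-p.1 - p.2)
      positivity
    rw [step1, step2, step3]
    nlinarith [key, hnonneg]

end MmatPSD

/-- The matrix `M_q` is positive semi-definite. -/
theorem Mmat_posSemidef (G : Type*) [AddCommGroup G] [Fintype G]
    (n : ℕ) (q : Fin n → G) :
    (Mmat (cnt q)).PosSemidef :=
  Mmat_posSemidef_of_counts (cnt q)
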